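/- Let α be a finite type of (finished) tasks, let r be a binary relation on α, and let b, e : α → ℝ with b T ≤ e T for all T and with r T τ implying e T < b τ. Then there exists a serial order of the tasks consistent with all precedence constraints: there is a list l : List α that contains every task exactly once (l is a permutation of the full enumeration of α, i.e., l.Nodup and every element of α is a member of l) such that whenever r T τ holds, T occurs strictly earlier than τ in l. Hence the concurrent execution of the finished tasks is equivalent to executing them serially in the order given by l. -/

import Mathlib

/-- For a finite set of finished tasks with nonempty validity intervals that
are separated along precedence arcs, there is a serial order consistent with
all precedence constraints: a duplicate-free list `l` containing every task,
in which `T` occurs strictly earlier than `τ` whenever `r T τ`. -/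
theorem exists_serial_order {α : Type*} [Fintype α] [DecidableEq α]
    (r : α → α → Prop) (b e : α → ℝ)
    (hne : ∀ T, b T ≤ e T) (hsep : ∀ T τ, r T τ → e T < b τ) :
    ∃ l : List α, l.Nodup ∧ (∀ T : α, T ∈ l) ∧
      ∀ T τ : α, r T τ → l.idxOf T < l.idxOf τ := by
  classical
  set l := (Finset.univ.toList (α := α)).mergeSort (fun x y => decide (b x ≤ b y)) with hl
  have hperm : l.Perm (Finset.univ.toList (α := α)) := List.mergeSort_perm _ _
  have hnodup : l.Nodup := hperm.nodup_iff.mpr (Finset.nodup_toList _)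
  have hmem : ∀ T : α, T ∈ l := fun T =>
    hperm.mem_iff.mpr (Finset.mem_toList.mpr (Finset.mem_univ T))
  have hsorted : l.Pairwise (fun x y => b x ≤ b y) := by
    have := List.pairwise_mergeSort (le := fun x y => decide (b x ≤ b y))
      (fun a b' c h₁ h₂ => by simpa using le_trans (by simpa using h₁) (by simpa using h₂))
      (fun a b' => by simpa using le_total (b a) (b b'))
      (Finset.univ.toList (α := α))
    simpa [hl] using this
  refine ⟨l, hnodup, hmem, fun T τ hr => ?_⟩
  have hbt : b T < b τ := lt_of_le_of_lt (hne T) (hsep T τ hr)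
  by_contra hle
  push_neg at hle
  have hT : l.idxOf T < l.length := List.idxOf_lt_length_iff.mpr (hmem T)
  have hτ : l.idxOf τ < l.length := List.idxOf_lt_length_iff.mpr (hmem τ)
  rcases lt_or_eq_of_le hle with h | h
  · have := hsorted.rel_get_of_lt (a := ⟨l.idxOf τ, hτ⟩) (b := ⟨l.idxOf T, hT⟩) h
    rw [List.idxOf_get, List.idxOf_get] at this
    exact absurd this (not_le.mpr hbt)
  · have : τ = T := by
      have h1 := List.idxOf_get (a := τ) hτ
      have h2 := List.idxOf_get (a := T) hT
      rw [← h1, ← h2]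
      congr 1
      exact Fin.ext h
    rw [this] at hbt
    exact lt_irrefl _ hbt
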